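/- arXiv:1207.3513 — 3 statements merged into one kernel-verified Lean document; each statement's English description precedes it below -/
import Mathlib

section
/- Let X_1, X_2, F_1,...,F_r be finite random variables such that for every i in [1:r] the Markov chain F_i - F_{[1:i-1]} X_{(i)_2} - X_{(i+1)_2} holds (i.e., F_i - F_{[1:i-1]}X_1 - X_2 for odd i and F_i - F_{[1:i-1]}X_2 - X_1 for even i). Then Sum_{i=1}^r I(F_i; X_{(i+1)_2} | F_{[1:i-1]}) = I(X_1;X_2) - I(X_1;X_2 | F_{[1:r]}). -/
open scoped BigOperators

namespace InfoTheory

variable {Ω : Type*} [Fintype Ω]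

/-- `p` is a probability mass function on the finite type `Ω`. -/
def IsPMF (p : Ω → ℝ) : Prop := (∀ ω, 0 ≤ p ω) ∧ ∑ ω, p ω = 1

/-- Distribution of the random variable `A` under `p`. -/
noncomputable def rvDist {α : Type*} [Fintype α] [DecidableEq α]
    (p : Ω → ℝ) (A : Ω → α) (a : α) : ℝ :=
  ∑ ω, if A ω = a then p ω else 0

/-- Shannon entropy (base 2) of the random variable `A` under `p`. -/
noncomputable def entH {α : Type*} [Fintype α] [DecidableEq α]
    (p : Ω → ℝ) (A : Ω → α) : ℝ :=
  -∑ a, rvDist p A a * Real.logb 2 (rvDist p A a)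

/-- Conditional entropy `H(A|B)`. -/
noncomputable def condH {α β : Type*} [Fintype α] [DecidableEq α] [Fintype β] [DecidableEq β]
    (p : Ω → ℝ) (A : Ω → α) (B : Ω → β) : ℝ :=
  entH p (fun ω => (A ω, B ω)) - entH p B

/-- Mutual information `I(A;B)`. -/
noncomputable def mi {α β : Type*} [Fintype α] [DecidableEq α] [Fintype β] [DecidableEq β]
    (p : Ω → ℝ) (A : Ω → α) (B : Ω → β) : ℝ :=
  entH p A + entH p B - entH p (fun ω => (A ω, B ω))

/-- Conditional mutual information `I(A;B|C)`. -/
noncomputable def cmi {α β γ : Type*} [Fintype α] [DecidableEq α] [Fintype β] [DecidableEq β]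
    [Fintype γ] [DecidableEq γ]
    (p : Ω → ℝ) (A : Ω → α) (B : Ω → β) (C : Ω → γ) : ℝ :=
  condH p A C + condH p B C - condH p (fun ω => (A ω, B ω)) C

/-- Markov chain `A - B - C`: `A` and `C` are conditionally independent given `B`. -/
def Markov {α β γ : Type*} [Fintype α] [DecidableEq α] [Fintype β] [DecidableEq β]
    [Fintype γ] [DecidableEq γ]
    (p : Ω → ℝ) (A : Ω → α) (B : Ω → β) (C : Ω → γ) : Prop :=
  ∀ a b c, rvDist p (fun ω => ((A ω, B ω), C ω)) ((a, b), c) * rvDist p B b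
    = rvDist p (fun ω => (A ω, B ω)) (a, b) * rvDist p (fun ω => (B ω, C ω)) (b, c)

/-- Total variation distance between two pmfs on the finite type `α`. -/
noncomputable def TV {α : Type*} [Fintype α] (p q : α → ℝ) : ℝ :=
  (∑ a, |p a - q a|) / 2

/-- The prefix `F_{[1:k]}` of a finite family of random variables, encoded by replacing
the coordinates beyond `k` by `none`. -/
def Fpre {r : ℕ} {𝓕 : Fin r → Type*} (F : ∀ i : Fin r, Ω → 𝓕 i) (k : ℕ) :
    Ω → ∀ j : Fin r, Option (𝓕 j) :=
  fun ω j => if (j : ℕ) < k then some (F j ω) else none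

/-- The full tuple `F_{[1:r]}`. -/
def Ffull {r : ℕ} {𝓕 : Fin r → Type*} (F : ∀ i : Fin r, Ω → 𝓕 i) :
    Ω → ∀ j : Fin r, 𝓕 j :=
  fun ω j => F j ω

end InfoTheory

open InfoTheory

namespace InfoTheoryAux
open InfoTheory Finset Real

variable {Ω : Type*} [Fintype Ω]

lemma rvDist_nonneg {α : Type*} [Fintype α] [DecidableEq α] {p : Ω → ℝ}
    (hp0 : ∀ ω, 0 ≤ p ω) (A : Ω → α) (a : α) : 0 ≤ rvDist p A a :=
  Finset.sum_nonneg fun ω _ => by split <;> simp [hp0 ω]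

lemma rvDist_le {α β : Type*} [Fintype α] [DecidableEq α] [Fintype β] [DecidableEq β]
    {p : Ω → ℝ} (hp0 : ∀ ω, 0 ≤ p ω) {A : Ω → α} {B : Ω → β} {a : α} {b : β}
    (h : ∀ ω, A ω = a → B ω = b) : rvDist p A a ≤ rvDist p B b := by
  refine Finset.sum_le_sum fun ω _ => ?_
  by_cases hA : A ω = a
  · simp [hA, h ω hA]
  · simp only [hA, if_false]
    split <;> simp [hp0 ω]

lemma rvDist_congr' {α β : Type*} [Fintype α] [DecidableEq α] [Fintype β] [DecidableEq β]
    (p : Ω → ℝ) (A : Ω → α) (B : Ω → β) (u : α → β) (v : β → α)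
    (hu : ∀ ω, u (A ω) = B ω) (hv : ∀ ω, v (B ω) = A ω) (b : β) :
    rvDist p B b = if u (v b) = b then rvDist p A (v b) else 0 := by
  by_cases hb : u (v b) = b
  · simp only [hb, if_true]
    refine Finset.sum_congr rfl fun ω _ => ?_
    congr 1
    refine propext ⟨?_, ?_⟩
    · intro h; rw [← h, hv]
    · intro h; rw [← hu, h, hb]
  · simp only [hb, if_false]
    refine Finset.sum_eq_zero fun ω _ => ?_
    rw [if_neg]
    intro h
    exact hb (by rw [← h, hv, hu, h])

lemma entH_congr {α β : Type*} [Fintype α] [DecidableEq α] [Fintype β] [DecidableEq β]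
    (p : Ω → ℝ) (A : Ω → α) (B : Ω → β) (u : α → β) (v : β → α)
    (hu : ∀ ω, u (A ω) = B ω) (hv : ∀ ω, v (B ω) = A ω) :
    entH p A = entH p B := by
  unfold entH
  congr 1
  have hA : ∀ a, rvDist p A a = if v (u a) = a then rvDist p B (u a) else 0 :=
    rvDist_congr' p B A v u hv hu
  have hB : ∀ b, rvDist p B b = if u (v b) = b then rvDist p A (v b) else 0 :=
    rvDist_congr' p A B u v hu hv
  calc ∑ a, rvDist p A a * Real.logb 2 (rvDist p A a)
      = ∑ a, if v (u a) = a then rvDist p B (u a) * Real.logb 2 (rvDist p B (u a)) else 0 := by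
        refine Finset.sum_congr rfl fun a _ => ?_
        rw [hA a]; split <;> simp
    _ = ∑ a ∈ Finset.univ.filter (fun a => v (u a) = a),
          rvDist p B (u a) * Real.logb 2 (rvDist p B (u a)) := by
        rw [Finset.sum_filter]
    _ = ∑ b ∈ Finset.univ.filter (fun b => u (v b) = b),
          rvDist p B b * Real.logb 2 (rvDist p B b) := by
        refine Finset.sum_nbij' (fun a => u a) (fun b => v b) ?_ ?_ ?_ ?_ ?_
        · intro a ha
          simp only [Finset.mem_filter, Finset.mem_univ, true_and] at ha ⊢
          rw [ha]
        · intro b hb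
          simp only [Finset.mem_filter, Finset.mem_univ, true_and] at hb ⊢
          rw [hb]
        · intro a ha
          simp only [Finset.mem_filter, Finset.mem_univ, true_and] at ha
          exact ha
        · intro b hb
          simp only [Finset.mem_filter, Finset.mem_univ, true_and] at hb
          exact hb
        · intro a _; rfl
    _ = ∑ b, if u (v b) = b then rvDist p A (v b) * Real.logb 2 (rvDist p A (v b)) else 0 := by
        rw [Finset.sum_filter]
        refine Finset.sum_congr rfl fun b _ => ?_
        split
        · next h => rw [hB b, if_pos h]
        · rfl
    _ = ∑ b, rvDist p B b * Real.logb 2 (rvDist p B b) := by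
        refine Finset.sum_congr rfl fun b _ => ?_
        rw [hB b]; split <;> simp

end InfoTheoryAux

namespace InfoTheoryAux
open InfoTheory Finset Real

variable {Ω : Type*} [Fintype Ω]

lemma sum_rvDist_pair_right {α β : Type*} [Fintype α] [DecidableEq α] [Fintype β] [DecidableEq β]
    (p : Ω → ℝ) (A : Ω → α) (B : Ω → β) (a : α) :
    ∑ b, rvDist p (fun ω => (A ω, B ω)) (a, b) = rvDist p A a := by
  unfold rvDist
  rw [Finset.sum_comm]
  refine Finset.sum_congr rfl fun ω _ => ?_
  by_cases hA : A ω = a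
  · simp [hA, Prod.ext_iff]
  · simp [hA, Prod.ext_iff]

lemma sum_rvDist_pair_left {α β : Type*} [Fintype α] [DecidableEq α] [Fintype β] [DecidableEq β]
    (p : Ω → ℝ) (A : Ω → α) (B : Ω → β) (b : β) :
    ∑ a, rvDist p (fun ω => (A ω, B ω)) (a, b) = rvDist p B b := by
  unfold rvDist
  rw [Finset.sum_comm]
  refine Finset.sum_congr rfl fun ω _ => ?_
  by_cases hB : B ω = b
  · simp [hB, Prod.ext_iff]
  · simp [hB, Prod.ext_iff]

end InfoTheoryAux

namespace InfoTheoryAux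
open InfoTheory Finset Real

variable {Ω : Type*} [Fintype Ω]

lemma rvDist_eq_of_iff {α β : Type*} [Fintype α] [DecidableEq α] [Fintype β] [DecidableEq β]
    (p : Ω → ℝ) {A : Ω → α} {B : Ω → β} {a : α} {b : β}
    (h : ∀ ω, A ω = a ↔ B ω = b) : rvDist p A a = rvDist p B b :=
  Finset.sum_congr rfl fun ω _ => if_congr (h ω) rfl rfl

lemma entH_markov {α β γ : Type*} [Fintype α] [DecidableEq α] [Fintype β] [DecidableEq β]
    [Fintype γ] [DecidableEq γ]
    (p : Ω → ℝ) (hp0 : ∀ ω, 0 ≤ p ω) (A : Ω → α) (B : Ω → β) (C : Ω → γ)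
    (h : Markov p A B C) :
    entH p (fun ω => ((A ω, B ω), C ω))
      = entH p (fun ω => (A ω, B ω)) + entH p (fun ω => (B ω, C ω)) - entH p B := by
  simp only [entH]
  set q := rvDist p (fun ω => ((A ω, B ω), C ω)) with hq
  set q1 := rvDist p (fun ω => (A ω, B ω)) with hq1
  set q2 := rvDist p (fun ω => (B ω, C ω)) with hq2
  set q0 := rvDist p B with hq0
  have m1 : ∀ (a : α) (b : β), ∑ c, q ((a,b),c) = q1 (a,b) := fun a b =>
    sum_rvDist_pair_right p (fun ω => (A ω, B ω)) C (a, b)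
  have m2 : ∀ (b : β) (c : γ), ∑ a, q ((a,b),c) = q2 (b,c) := by
    intro b c
    have e : ∀ a : α, q ((a,b),c) = rvDist p (fun ω => (A ω, (B ω, C ω))) (a,(b,c)) := by
      intro a
      exact rvDist_eq_of_iff p (fun ω => by simp [Prod.ext_iff, and_assoc])
    simp only [e]
    exact sum_rvDist_pair_left p A (fun ω => (B ω, C ω)) (b, c)
  have m3 : ∀ b : β, ∑ a, q1 (a,b) = q0 b := fun b =>
    sum_rvDist_pair_left p A B b
  have key : ∀ (a : α) (b : β) (c : γ), q ((a,b),c) * Real.logb 2 (q ((a,b),c))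
      = q ((a,b),c) * (Real.logb 2 (q1 (a,b)) + Real.logb 2 (q2 (b,c)) - Real.logb 2 (q0 b)) := by
    intro a b c
    by_cases hz : q ((a,b),c) = 0
    · simp [hz]
    have hqpos : 0 < q ((a,b),c) :=
      lt_of_le_of_ne (rvDist_nonneg hp0 _ _) (Ne.symm hz)
    have hqle : q ((a,b),c) ≤ q0 b := by
      refine rvDist_le hp0 (fun ω hw => ?_)
      simp only [Prod.ext_iff] at hw
      exact hw.1.2
    have h0pos : 0 < q0 b := lt_of_lt_of_le hqpos hqle
    have hM := h a b c
    have h12pos : 0 < q1 (a,b) * q2 (b,c) := by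
      rw [← hM]; positivity
    have h1ne : q1 (a,b) ≠ 0 := by
      intro e; rw [e, zero_mul] at h12pos; exact lt_irrefl 0 h12pos
    have h2ne : q2 (b,c) ≠ 0 := by
      intro e; rw [e, mul_zero] at h12pos; exact lt_irrefl 0 h12pos
    have hrep : q ((a,b),c) = q1 (a,b) * q2 (b,c) / q0 b := by
      field_simp
      linarith [hM]
    have hlog : Real.logb 2 (q ((a,b),c))
        = Real.logb 2 (q1 (a,b)) + Real.logb 2 (q2 (b,c)) - Real.logb 2 (q0 b) := by
      rw [hrep, Real.logb_div (ne_of_gt h12pos) (ne_of_gt h0pos),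
        Real.logb_mul h1ne h2ne]
    rw [hlog]
  have main : ∑ x : (α × β) × γ, q x * Real.logb 2 (q x)
      = (∑ y : α × β, q1 y * Real.logb 2 (q1 y))
        + (∑ z : β × γ, q2 z * Real.logb 2 (q2 z))
        - ∑ b, q0 b * Real.logb 2 (q0 b) := by
    calc ∑ x : (α × β) × γ, q x * Real.logb 2 (q x)
        = ∑ a, ∑ b, ∑ c, q ((a,b),c) * Real.logb 2 (q ((a,b),c)) := by
          rw [Fintype.sum_prod_type, Fintype.sum_prod_type]
      _ = ∑ a, ∑ b, ∑ c, q ((a,b),c) *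
            (Real.logb 2 (q1 (a,b)) + Real.logb 2 (q2 (b,c)) - Real.logb 2 (q0 b)) :=
          Finset.sum_congr rfl fun a _ => Finset.sum_congr rfl fun b _ =>
            Finset.sum_congr rfl fun c _ => key a b c
      _ = (∑ a, ∑ b, ∑ c, q ((a,b),c) * Real.logb 2 (q1 (a,b)))
          + (∑ a, ∑ b, ∑ c, q ((a,b),c) * Real.logb 2 (q2 (b,c)))
          - (∑ a, ∑ b, ∑ c, q ((a,b),c) * Real.logb 2 (q0 b)) := by
          simp only [mul_add, mul_sub, Finset.sum_add_distrib, Finset.sum_sub_distrib]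
      _ = (∑ y : α × β, q1 y * Real.logb 2 (q1 y))
          + (∑ z : β × γ, q2 z * Real.logb 2 (q2 z))
          - ∑ b, q0 b * Real.logb 2 (q0 b) := by
          congr 1
          · congr 1
            · rw [Fintype.sum_prod_type]
              refine Finset.sum_congr rfl fun a _ => Finset.sum_congr rfl fun b _ => ?_
              rw [← Finset.sum_mul, m1]
            · rw [Fintype.sum_prod_type]
              rw [Finset.sum_comm]
              refine Finset.sum_congr rfl fun b _ => ?_
              rw [Finset.sum_comm]
              refine Finset.sum_congr rfl fun c _ => ?_
              rw [← Finset.sum_mul, m2]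
          · calc ∑ a, ∑ b, ∑ c, q ((a,b),c) * Real.logb 2 (q0 b)
                = ∑ a, ∑ b, q1 (a,b) * Real.logb 2 (q0 b) := by
                  refine Finset.sum_congr rfl fun a _ => Finset.sum_congr rfl fun b _ => ?_
                  rw [← Finset.sum_mul, m1]
              _ = ∑ b, q0 b * Real.logb 2 (q0 b) := by
                  rw [Finset.sum_comm]
                  refine Finset.sum_congr rfl fun b _ => ?_
                  rw [← Finset.sum_mul, m3]
  rw [main]
  ring

end InfoTheoryAux

namespace InfoTheoryAux
open InfoTheory Finset Real

variable {Ω : Type*} [Fintype Ω]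

lemma cmi_comm {α β γ : Type*} [Fintype α] [DecidableEq α] [Fintype β] [DecidableEq β]
    [Fintype γ] [DecidableEq γ] (p : Ω → ℝ) (A : Ω → α) (B : Ω → β) (C : Ω → γ) :
    cmi p A B C = cmi p B A C := by
  have e : entH p (fun ω => ((A ω, B ω), C ω)) = entH p (fun ω => ((B ω, A ω), C ω)) :=
    entH_congr p _ _ (fun x => ((x.1.2, x.1.1), x.2)) (fun x => ((x.1.2, x.1.1), x.2))
      (fun ω => rfl) (fun ω => rfl)
  simp only [cmi, condH, e]
  ring

lemma entH_const {α : Type*} [Fintype α] [DecidableEq α] (p : Ω → ℝ)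
    (hp : ∑ ω, p ω = 1) (c : α) : entH p (fun _ => c) = 0 := by
  unfold entH rvDist
  refine neg_eq_zero.mpr (Finset.sum_eq_zero fun a _ => ?_)
  by_cases hc : c = a
  · simp [hc, hp]
  · simp [hc]

lemma condH_const {α β : Type*} [Fintype α] [DecidableEq α] [Fintype β] [DecidableEq β]
    (p : Ω → ℝ) (hp : ∑ ω, p ω = 1) (A : Ω → α) (c : β) :
    condH p A (fun _ => c) = entH p A := by
  unfold condH
  rw [entH_const p hp c, sub_zero]
  exact entH_congr p (fun ω => (A ω, c)) A Prod.fst (fun a => (a, c))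
    (fun ω => rfl) (fun ω => rfl)

lemma cmi_step {α β γ γ' φ : Type*} [Fintype α] [DecidableEq α] [Fintype β] [DecidableEq β]
    [Fintype γ] [DecidableEq γ] [Fintype γ'] [DecidableEq γ'] [Fintype φ] [DecidableEq φ]
    (p : Ω → ℝ) (hp0 : ∀ ω, 0 ≤ p ω)
    (A : Ω → α) (B : Ω → β) (Fi : Ω → φ) (G : Ω → γ) (G' : Ω → γ')
    (u : γ' → γ × φ) (v : γ × φ → γ')
    (hu : ∀ ω, u (G' ω) = (G ω, Fi ω)) (hv : ∀ ω, v (G ω, Fi ω) = G' ω)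
    (hM : Markov p Fi (fun ω => (G ω, A ω)) B) :
    cmi p Fi B G = cmi p A B G - cmi p A B G' := by
  have hmk := entH_markov p hp0 Fi (fun ω => (G ω, A ω)) B hM
  have e1 : entH p (fun ω => ((A ω, B ω), G ω)) = entH p (fun ω => (A ω, (B ω, G ω))) :=
    entH_congr p _ _ (fun x => (x.1.1, (x.1.2, x.2))) (fun x => ((x.1, x.2.1), x.2.2))
      (fun ω => rfl) (fun ω => rfl)
  have e2 : entH p (fun ω => ((Fi ω, B ω), G ω)) = entH p (fun ω => (Fi ω, (B ω, G ω))) :=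
    entH_congr p _ _ (fun x => (x.1.1, (x.1.2, x.2))) (fun x => ((x.1, x.2.1), x.2.2))
      (fun ω => rfl) (fun ω => rfl)
  have e3 : entH p G' = entH p (fun ω => (Fi ω, G ω)) :=
    entH_congr p _ _ (fun g' => ((u g').2, (u g').1)) (fun fg => v (fg.2, fg.1))
      (fun ω => by simp only [hu]) (fun ω => hv ω)
  have e4 : entH p (fun ω => (A ω, G' ω)) = entH p (fun ω => (Fi ω, (A ω, G ω))) :=
    entH_congr p _ _ (fun x => ((u x.2).2, (x.1, (u x.2).1)))
      (fun y => (y.2.1, v (y.2.2, y.1)))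
      (fun ω => by simp only [hu]) (fun ω => by show (A ω, v (G ω, Fi ω)) = _; rw [hv ω])
  have e5 : entH p (fun ω => (B ω, G' ω)) = entH p (fun ω => (Fi ω, (B ω, G ω))) :=
    entH_congr p _ _ (fun x => ((u x.2).2, (x.1, (u x.2).1)))
      (fun y => (y.2.1, v (y.2.2, y.1)))
      (fun ω => by simp only [hu]) (fun ω => by show (B ω, v (G ω, Fi ω)) = _; rw [hv ω])
  have e6 : entH p (fun ω => ((A ω, B ω), G' ω))
      = entH p (fun ω => (Fi ω, (A ω, (B ω, G ω)))) :=
    entH_congr p _ _ (fun x => ((u x.2).2, (x.1.1, (x.1.2, (u x.2).1))))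
      (fun y => ((y.2.1, y.2.2.1), v (y.2.2.2, y.1)))
      (fun ω => by simp only [hu])
      (fun ω => by show ((A ω, B ω), v (G ω, Fi ω)) = _; rw [hv ω])
  have e7 : entH p (fun ω => ((Fi ω, (G ω, A ω)), B ω))
      = entH p (fun ω => (Fi ω, (A ω, (B ω, G ω)))) :=
    entH_congr p _ _ (fun x => (x.1.1, (x.1.2.2, (x.2, x.1.2.1))))
      (fun y => ((y.1, (y.2.2.2, y.2.1)), y.2.2.1))
      (fun ω => rfl) (fun ω => rfl)
  have e8 : entH p (fun ω => (Fi ω, (G ω, A ω))) = entH p (fun ω => (Fi ω, (A ω, G ω))) :=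
    entH_congr p _ _ (fun x => (x.1, (x.2.2, x.2.1))) (fun x => (x.1, (x.2.2, x.2.1)))
      (fun ω => rfl) (fun ω => rfl)
  have e9 : entH p (fun ω => ((G ω, A ω), B ω)) = entH p (fun ω => (A ω, (B ω, G ω))) :=
    entH_congr p _ _ (fun x => (x.1.2, (x.2, x.1.1))) (fun x => ((x.2.2, x.1), x.2.1))
      (fun ω => rfl) (fun ω => rfl)
  have e10 : entH p (fun ω => (G ω, A ω)) = entH p (fun ω => (A ω, G ω)) :=
    entH_congr p _ _ (fun x => (x.2, x.1)) (fun x => (x.2, x.1)) (fun ω => rfl) (fun ω => rfl)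
  rw [e7, e8, e9, e10] at hmk
  simp only [cmi, condH]
  rw [e1, e2, e3, e4, e5, e6]
  linarith [hmk]

end InfoTheoryAux

/-- If the Markov chains `F_i - F_{[1:i-1]} X_{(i)_2} - X_{(i+1)_2}` hold for
all `i ∈ [1:r]` (rounds are indexed by `i : Fin r`, with `i` corresponding to round `i+1`, so
that odd rounds are those with `Even (i : ℕ)`), then
`∑_{i=1}^r I(F_i; X_{(i+1)_2} | F_{[1:i-1]}) = I(X_1;X_2) - I(X_1;X_2|F_{[1:r]})`. -/
theorem sum_cmi_eq_mi_sub_cmi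
    {Ω 𝒳₁ 𝒳₂ : Type*} [Fintype Ω] [Fintype 𝒳₁] [DecidableEq 𝒳₁]
    [Fintype 𝒳₂] [DecidableEq 𝒳₂] {r : ℕ} {𝓕 : Fin r → Type*}
    [∀ i, Fintype (𝓕 i)] [∀ i, DecidableEq (𝓕 i)]
    (p : Ω → ℝ) (hp : IsPMF p)
    (X1 : Ω → 𝒳₁) (X2 : Ω → 𝒳₂) (F : ∀ i : Fin r, Ω → 𝓕 i)
    (hMarkov : ∀ i : Fin r,
      (Even (i : ℕ) →
        Markov p (F i) (fun ω => (Fpre F (i : ℕ) ω, X1 ω)) X2) ∧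
      (¬ Even (i : ℕ) →
        Markov p (F i) (fun ω => (Fpre F (i : ℕ) ω, X2 ω)) X1)) :
    ∑ i : Fin r,
        (if Even (i : ℕ) then cmi p (F i) X2 (Fpre F (i : ℕ))
         else cmi p (F i) X1 (Fpre F (i : ℕ)))
      = mi p X1 X2 - cmi p X1 X2 (Fpre F r) := by
  classical
  obtain ⟨hp0, hps⟩ := hp
  have hΩ : Nonempty Ω := by
    by_contra h
    rw [not_nonempty_iff] at h
    rw [Finset.univ_eq_empty, Finset.sum_empty] at hps
    norm_num at hps
  obtain ⟨ω₀⟩ := hΩ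
  have step : ∀ i : Fin r,
      (if Even (i : ℕ) then cmi p (F i) X2 (Fpre F (i : ℕ))
        else cmi p (F i) X1 (Fpre F (i : ℕ)))
      = cmi p X1 X2 (Fpre F (i : ℕ)) - cmi p X1 X2 (Fpre F ((i : ℕ) + 1)) := by
    intro i
    set u : (∀ j : Fin r, Option (𝓕 j)) → (∀ j : Fin r, Option (𝓕 j)) × 𝓕 i :=
      fun g => (fun j => if (j : ℕ) < (i : ℕ) then g j else none, (g i).getD (F i ω₀))
      with hu_def
    set v : (∀ j : Fin r, Option (𝓕 j)) × 𝓕 i → (∀ j : Fin r, Option (𝓕 j)) :=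
      fun gf j => if (j : ℕ) < (i : ℕ) then gf.1 j
        else if h : j = i then some (cast (congrArg 𝓕 h).symm gf.2) else none
      with hv_def
    have hu : ∀ ω, u (Fpre F ((i : ℕ) + 1) ω) = (Fpre F (i : ℕ) ω, F i ω) := by
      intro ω
      refine Prod.ext ?_ ?_
      · funext j
        simp only [hu_def, Fpre]
        by_cases hj : (j : ℕ) < (i : ℕ)
        · simp [hj, Nat.lt_succ_of_lt hj]
        · simp [hj]
      · simp [hu_def, Fpre, Nat.lt_succ_self]
    have hv : ∀ ω, v (Fpre F (i : ℕ) ω, F i ω) = Fpre F ((i : ℕ) + 1) ω := by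
      intro ω
      funext j
      simp only [hv_def, Fpre]
      by_cases hj : (j : ℕ) < (i : ℕ)
      · simp [hj, Nat.lt_succ_of_lt hj]
      · by_cases hji : j = i
        · subst hji
          simp [hj, Nat.lt_succ_self]
        · have hne : (j : ℕ) ≠ (i : ℕ) := fun hc => hji (Fin.ext hc)
          have : ¬ ((j : ℕ) < (i : ℕ) + 1) := by omega
          simp [hj, hji, this]
    by_cases hev : Even (i : ℕ)
    · rw [if_pos hev]
      exact InfoTheoryAux.cmi_step p hp0 X1 X2 (F i) (Fpre F (i : ℕ))
        (Fpre F ((i : ℕ) + 1)) u v hu hv ((hMarkov i).1 hev)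
    · rw [if_neg hev]
      have h2 := InfoTheoryAux.cmi_step p hp0 X2 X1 (F i) (Fpre F (i : ℕ))
        (Fpre F ((i : ℕ) + 1)) u v hu hv ((hMarkov i).2 hev)
      rw [h2, InfoTheoryAux.cmi_comm p X2 X1 (Fpre F (i : ℕ)),
        InfoTheoryAux.cmi_comm p X2 X1 (Fpre F ((i : ℕ) + 1))]
  have h0 : cmi p X1 X2 (Fpre F 0) = mi p X1 X2 := by
    have hF0 : Fpre F 0 = fun _ => (fun j => (none : Option (𝓕 j))) := by
      funext ω j; simp [Fpre]
    rw [hF0]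
    unfold cmi mi
    rw [InfoTheoryAux.condH_const p hps, InfoTheoryAux.condH_const p hps,
      InfoTheoryAux.condH_const p hps]
  calc ∑ i : Fin r,
        (if Even (i : ℕ) then cmi p (F i) X2 (Fpre F (i : ℕ))
         else cmi p (F i) X1 (Fpre F (i : ℕ)))
      = ∑ i : Fin r,
          (cmi p X1 X2 (Fpre F (i : ℕ)) - cmi p X1 X2 (Fpre F ((i : ℕ) + 1))) :=
        Finset.sum_congr rfl fun i _ => step i
    _ = ∑ k ∈ Finset.range r,
          (cmi p X1 X2 (Fpre F k) - cmi p X1 X2 (Fpre F (k + 1))) :=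
        Fin.sum_univ_eq_sum_range (fun k => cmi p X1 X2 (Fpre F k) - cmi p X1 X2 (Fpre F (k + 1))) r
    _ = cmi p X1 X2 (Fpre F 0) - cmi p X1 X2 (Fpre F r) :=
        Finset.sum_range_sub' (fun k => cmi p X1 X2 (Fpre F k)) r
    _ = mi p X1 X2 - cmi p X1 X2 (Fpre F r) := by rw [h0]
end

section
/- Let X_1, X_2, Z, F_1,...,F_r be finite random variables such that for every i in [1:r] the Markov chain F_i - F_{[1:i-1]} X_{(i)_2} - Z X_{(i+1)_2} holds. Then for every a in [1:r], Sum_{i=a}^r ( I(F_i; X_{(i+1)_2} | F_{[1:i-1]}) - I(F_i; Z | F_{[1:i-1]}) ) = I(X_1;X_2 | F_{[1:a-1]}) - I(X_1;X_2 | F_{[1:r]}) - I(F_{[1:r]}; Z | F_{[1:a-1]}). -/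
open scoped BigOperators

open InfoTheory

set_option linter.unusedSectionVars false

open InfoTheory
section Aux
variable {Ω : Type*} [Fintype Ω]

lemma myRvDist_nonneg {α : Type*} [Fintype α] [DecidableEq α]
    (p : Ω → ℝ) (hp0 : ∀ ω, 0 ≤ p ω) (A : Ω → α) (a : α) : 0 ≤ rvDist p A a := by
  apply Finset.sum_nonneg
  intro ω _
  split <;> simp [hp0 ω]

lemma myRvDist_congr {α β : Type*} [Fintype α] [DecidableEq α] [Fintype β] [DecidableEq β]
    (p : Ω → ℝ) (A : Ω → α) (B : Ω → β) (a : α) (b : β)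
    (h : ∀ ω, A ω = a ↔ B ω = b) : rvDist p A a = rvDist p B b := by
  unfold rvDist
  exact Finset.sum_congr rfl fun ω _ => if_congr (h ω) rfl rfl

lemma myRvDist_pair_sum {α β : Type*} [Fintype α] [DecidableEq α] [Fintype β] [DecidableEq β]
    (p : Ω → ℝ) (A : Ω → α) (B : Ω → β) (a : α) :
    rvDist p A a = ∑ b, rvDist p (fun ω => (A ω, B ω)) (a, b) := by
  unfold rvDist
  rw [Finset.sum_comm]
  refine Finset.sum_congr rfl fun ω _ => ?_
  by_cases h : A ω = a
  · simp [Prod.ext_iff, h]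
  · simp [Prod.ext_iff, h]

end Aux
section Aux2
variable {Ω : Type*} [Fintype Ω]

lemma myEntH_comp {α β : Type*} [Fintype α] [DecidableEq α] [Fintype β] [DecidableEq β]
    (p : Ω → ℝ) (g : α → β) (hg : Function.Injective g) (A : Ω → α) :
    entH p (fun ω => g (A ω)) = entH p A := by
  unfold entH
  congr 1
  have hvan : ∀ b ∈ (Finset.univ : Finset β), b ∉ Finset.univ.image g →
      rvDist p (fun ω => g (A ω)) b * Real.logb 2 (rvDist p (fun ω => g (A ω)) b) = 0 := by
    intro b _ hb
    have h0 : rvDist p (fun ω => g (A ω)) b = 0 := by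
      apply Finset.sum_eq_zero
      intro ω _
      rw [if_neg]
      intro hc
      exact hb (Finset.mem_image.2 ⟨A ω, Finset.mem_univ _, hc⟩)
    rw [h0]; ring
  rw [← Finset.sum_subset (Finset.subset_univ (Finset.univ.image g)) hvan,
    Finset.sum_image (fun a _ a' _ h => hg h)]
  refine Finset.sum_congr rfl fun a _ => ?_
  have : rvDist p (fun ω => g (A ω)) (g a) = rvDist p A a :=
    myRvDist_congr p _ A _ a (fun ω => hg.eq_iff)
  rw [this]

lemma myEntH_pair_of_determines {α β : Type*} [Fintype α] [DecidableEq α] [Fintype β]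
    [DecidableEq β] (p : Ω → ℝ) (A : Ω → α) (B : Ω → β)
    (h : ∀ ω ω', A ω = A ω' → B ω = B ω') :
    entH p (fun ω => (A ω, B ω)) = entH p A := by
  unfold entH
  rw [Fintype.sum_prod_type]
  congr 1
  refine Finset.sum_congr rfl fun a _ => ?_
  by_cases ha : ∃ ω, A ω = a
  · obtain ⟨ω₀, hω₀⟩ := ha
    have key : ∀ b, rvDist p (fun ω => (A ω, B ω)) (a, b) =
        if b = B ω₀ then rvDist p A a else 0 := by
      intro b
      by_cases hb : b = B ω₀
      · rw [if_pos hb]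
        refine myRvDist_congr p _ A _ a fun ω => ?_
        constructor
        · intro he; exact (Prod.mk.injEq _ _ _ _ ▸ he).1
        · intro hA
          have : B ω = B ω₀ := h ω ω₀ (hA.trans hω₀.symm)
          rw [Prod.mk.injEq]; exact ⟨hA, this.trans hb.symm⟩
      · rw [if_neg hb]
        apply Finset.sum_eq_zero
        intro ω _
        rw [if_neg]
        intro hc
        rw [Prod.mk.injEq] at hc
        exact hb (hc.2 ▸ (h ω ω₀ (hc.1.trans hω₀.symm)).symm ▸ rfl)
    rw [Finset.sum_congr rfl fun b _ => by rw [key b]]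
    rw [Finset.sum_eq_single (B ω₀)]
    · rw [if_pos rfl]
    · intro b _ hb; rw [if_neg hb]; ring
    · intro hb; exact absurd (Finset.mem_univ _) hb
  · push_neg at ha
    have h1 : rvDist p A a = 0 := Finset.sum_eq_zero fun ω _ => if_neg (ha ω)
    have h2 : ∀ b, rvDist p (fun ω => (A ω, B ω)) (a, b) = 0 := fun b =>
      Finset.sum_eq_zero fun ω _ => if_neg (by rw [Prod.mk.injEq]; exact fun hc => ha ω hc.1)
    simp [h1, h2]

lemma myEntH_congr {α β : Type*} [Fintype α] [DecidableEq α] [Fintype β] [DecidableEq β]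
    (p : Ω → ℝ) (A : Ω → α) (B : Ω → β)
    (h : ∀ ω ω', A ω = A ω' ↔ B ω = B ω') : entH p A = entH p B := by
  have h1 := myEntH_pair_of_determines p A B (fun ω ω' e => (h ω ω').1 e)
  have h2 := myEntH_pair_of_determines p B A (fun ω ω' e => (h ω ω').2 e)
  have h3 : entH p (fun ω => (B ω, A ω)) = entH p (fun ω => (A ω, B ω)) :=
    myEntH_comp p Prod.swap Prod.swap_injective (fun ω => (A ω, B ω))
  rw [← h1, ← h3, h2]

lemma myCmi_eq {α β γ : Type*} [Fintype α] [DecidableEq α] [Fintype β] [DecidableEq β]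
    [Fintype γ] [DecidableEq γ] (p : Ω → ℝ) (A : Ω → α) (B : Ω → β) (C : Ω → γ) :
    cmi p A B C = entH p (fun ω => (A ω, C ω)) + entH p (fun ω => (B ω, C ω))
      - entH p (fun ω => ((A ω, B ω), C ω)) - entH p C := by
  unfold cmi condH
  ring

lemma myCmi_comm {α β γ : Type*} [Fintype α] [DecidableEq α] [Fintype β] [DecidableEq β]
    [Fintype γ] [DecidableEq γ] (p : Ω → ℝ) (A : Ω → α) (B : Ω → β) (C : Ω → γ) :
    cmi p A B C = cmi p B A C := by
  rw [myCmi_eq, myCmi_eq]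
  have : entH p (fun ω => ((A ω, B ω), C ω)) = entH p (fun ω => ((B ω, A ω), C ω)) :=
    myEntH_congr p _ _ fun ω ω' => by simp only [Prod.mk.injEq]; tauto
  rw [this]; ring

end Aux2
section Aux3
variable {Ω : Type*} [Fintype Ω]
variable {α β γ δ : Type*} [Fintype α] [DecidableEq α] [Fintype β] [DecidableEq β]
  [Fintype γ] [DecidableEq γ] [Fintype δ] [DecidableEq δ]

lemma myMarkov_comp_right (p : Ω → ℝ) (A : Ω → α) (B : Ω → β) (C : Ω → γ)
    (e : γ → δ) (he : Function.Injective e) (h : Markov p A B C) :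
    Markov p A B (fun ω => e (C ω)) := by
  intro a b d
  by_cases hd : ∃ c, e c = d
  · obtain ⟨c, rfl⟩ := hd
    have h1 : rvDist p (fun ω => ((A ω, B ω), e (C ω))) ((a, b), e c)
        = rvDist p (fun ω => ((A ω, B ω), C ω)) ((a, b), c) :=
      myRvDist_congr p _ _ _ _ fun ω => by
        simp only [Prod.mk.injEq, he.eq_iff]
    have h2 : rvDist p (fun ω => (B ω, e (C ω))) (b, e c)
        = rvDist p (fun ω => (B ω, C ω)) (b, c) :=
      myRvDist_congr p _ _ _ _ fun ω => by
        simp only [Prod.mk.injEq, he.eq_iff]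
    rw [h1, h2]
    exact h a b c
  · push_neg at hd
    have h1 : rvDist p (fun ω => ((A ω, B ω), e (C ω))) ((a, b), d) = 0 :=
      Finset.sum_eq_zero fun ω _ => if_neg (by
        simp only [Prod.mk.injEq]
        exact fun hc => hd (C ω) hc.2)
    have h2 : rvDist p (fun ω => (B ω, e (C ω))) (b, d) = 0 :=
      Finset.sum_eq_zero fun ω _ => if_neg (by
        simp only [Prod.mk.injEq]
        exact fun hc => hd (C ω) hc.2)
    rw [h1, h2]; ring

lemma myMarkov_fst (p : Ω → ℝ) (A : Ω → α) (B : Ω → β) (C : Ω → γ) (D : Ω → δ)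
    (h : Markov p A B (fun ω => (C ω, D ω))) : Markov p A B C := by
  intro a b c
  have h1 : rvDist p (fun ω => ((A ω, B ω), C ω)) ((a, b), c)
      = ∑ d, rvDist p (fun ω => ((A ω, B ω), (C ω, D ω))) ((a, b), (c, d)) := by
    rw [myRvDist_pair_sum p (fun ω => ((A ω, B ω), C ω)) D ((a, b), c)]
    exact Finset.sum_congr rfl fun d _ => myRvDist_congr p _ _ _ _ fun ω => by
      simp only [Prod.mk.injEq]; tauto
  have h2 : rvDist p (fun ω => (B ω, C ω)) (b, c)
      = ∑ d, rvDist p (fun ω => (B ω, (C ω, D ω))) (b, (c, d)) := by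
    rw [myRvDist_pair_sum p (fun ω => (B ω, C ω)) D (b, c)]
    exact Finset.sum_congr rfl fun d _ => myRvDist_congr p _ _ _ _ fun ω => by
      simp only [Prod.mk.injEq]; tauto
  rw [h1, h2, Finset.sum_mul, Finset.mul_sum]
  exact Finset.sum_congr rfl fun d _ => h a b (c, d)

end Aux3
section Aux4
variable {Ω : Type*} [Fintype Ω]
variable {α β γ : Type*} [Fintype α] [DecidableEq α] [Fintype β] [DecidableEq β]
  [Fintype γ] [DecidableEq γ]

lemma myEntH_triple (p : Ω → ℝ) (hp0 : ∀ ω, 0 ≤ p ω) (A : Ω → α) (B : Ω → β) (C : Ω → γ)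
    (h : Markov p A B C) :
    entH p (fun ω => ((A ω, B ω), C ω))
      = entH p (fun ω => (A ω, B ω)) + entH p (fun ω => (B ω, C ω)) - entH p B := by
  have hnn : ∀ a b c, 0 ≤ rvDist p (fun ω => ((A ω, B ω), C ω)) ((a, b), c) :=
    fun a b c => myRvDist_nonneg p hp0 _ _
  have hab : ∀ a b, rvDist p (fun ω => (A ω, B ω)) (a, b)
      = ∑ c, rvDist p (fun ω => ((A ω, B ω), C ω)) ((a, b), c) :=
    fun a b => myRvDist_pair_sum p _ C _
  have hbc : ∀ b c, rvDist p (fun ω => (B ω, C ω)) (b, c)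
      = ∑ a, rvDist p (fun ω => ((A ω, B ω), C ω)) ((a, b), c) := by
    intro b c
    rw [myRvDist_pair_sum p (fun ω => (B ω, C ω)) A (b, c)]
    exact Finset.sum_congr rfl fun a _ => myRvDist_congr p _ _ _ _ fun ω => by
      simp only [Prod.mk.injEq]; tauto
  have hb : ∀ b, rvDist p B b
      = ∑ a, ∑ c, rvDist p (fun ω => ((A ω, B ω), C ω)) ((a, b), c) := by
    intro b
    rw [myRvDist_pair_sum p B (fun ω => (A ω, C ω)) b, Fintype.sum_prod_type]
    refine Finset.sum_congr rfl fun a _ => Finset.sum_congr rfl fun c _ => ?_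
    exact myRvDist_congr p _ _ _ _ fun ω => by
      simp only [Prod.mk.injEq]; tauto
  -- pointwise key identity
  have key : ∀ a b c,
      rvDist p (fun ω => ((A ω, B ω), C ω)) ((a, b), c)
        * Real.logb 2 (rvDist p (fun ω => ((A ω, B ω), C ω)) ((a, b), c))
      = rvDist p (fun ω => ((A ω, B ω), C ω)) ((a, b), c)
          * Real.logb 2 (rvDist p (fun ω => (A ω, B ω)) (a, b))
        + rvDist p (fun ω => ((A ω, B ω), C ω)) ((a, b), c)
          * Real.logb 2 (rvDist p (fun ω => (B ω, C ω)) (b, c))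
        - rvDist p (fun ω => ((A ω, B ω), C ω)) ((a, b), c)
          * Real.logb 2 (rvDist p B b) := by
    intro a b c
    by_cases h0 : rvDist p (fun ω => ((A ω, B ω), C ω)) ((a, b), c) = 0
    · rw [h0]; ring
    · have hpos : 0 < rvDist p (fun ω => ((A ω, B ω), C ω)) ((a, b), c) :=
        lt_of_le_of_ne (hnn a b c) (Ne.symm h0)
      have habpos : 0 < rvDist p (fun ω => (A ω, B ω)) (a, b) := by
        rw [hab]
        exact lt_of_lt_of_le hpos (Finset.single_le_sum (fun c _ => hnn a b c)
          (Finset.mem_univ c))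
      have hbcpos : 0 < rvDist p (fun ω => (B ω, C ω)) (b, c) := by
        rw [hbc]
        exact lt_of_lt_of_le hpos (Finset.single_le_sum (fun a _ => hnn a b c)
          (Finset.mem_univ a))
      have hbpos : 0 < rvDist p B b := by
        rw [hb]
        refine lt_of_lt_of_le hpos ?_
        calc rvDist p (fun ω => ((A ω, B ω), C ω)) ((a, b), c)
            ≤ ∑ c, rvDist p (fun ω => ((A ω, B ω), C ω)) ((a, b), c) :=
              Finset.single_le_sum (fun c _ => hnn a b c) (Finset.mem_univ c)
          _ ≤ ∑ a, ∑ c, rvDist p (fun ω => ((A ω, B ω), C ω)) ((a, b), c) :=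
              Finset.single_le_sum
                (fun a _ => Finset.sum_nonneg fun c _ => hnn a b c) (Finset.mem_univ a)
      have hdiv : rvDist p (fun ω => ((A ω, B ω), C ω)) ((a, b), c)
          = rvDist p (fun ω => (A ω, B ω)) (a, b) * rvDist p (fun ω => (B ω, C ω)) (b, c)
            / rvDist p B b := by
        rw [eq_div_iff hbpos.ne']
        exact h a b c
      have hlog : Real.logb 2 (rvDist p (fun ω => ((A ω, B ω), C ω)) ((a, b), c))
          = Real.logb 2 (rvDist p (fun ω => (A ω, B ω)) (a, b))
            + Real.logb 2 (rvDist p (fun ω => (B ω, C ω)) (b, c))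
            - Real.logb 2 (rvDist p B b) := by
        rw [hdiv, Real.logb_div (mul_ne_zero habpos.ne' hbcpos.ne') hbpos.ne',
          Real.logb_mul habpos.ne' hbcpos.ne']
      rw [hlog]; ring
  have SumEq : ∑ x : (α × β) × γ,
      rvDist p (fun ω => ((A ω, B ω), C ω)) x
        * Real.logb 2 (rvDist p (fun ω => ((A ω, B ω), C ω)) x)
      = (∑ y : α × β, rvDist p (fun ω => (A ω, B ω)) y
          * Real.logb 2 (rvDist p (fun ω => (A ω, B ω)) y))
        + (∑ z : β × γ, rvDist p (fun ω => (B ω, C ω)) z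
          * Real.logb 2 (rvDist p (fun ω => (B ω, C ω)) z))
        - ∑ b, rvDist p B b * Real.logb 2 (rvDist p B b) := by
    have T1 : ∑ a, ∑ b, ∑ c, rvDist p (fun ω => ((A ω, B ω), C ω)) ((a, b), c)
          * Real.logb 2 (rvDist p (fun ω => (A ω, B ω)) (a, b))
        = ∑ a, ∑ b, rvDist p (fun ω => (A ω, B ω)) (a, b)
          * Real.logb 2 (rvDist p (fun ω => (A ω, B ω)) (a, b)) := by
      refine Finset.sum_congr rfl fun a _ => Finset.sum_congr rfl fun b _ => ?_
      rw [← Finset.sum_mul, ← hab]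
    have T2 : ∑ a, ∑ b, ∑ c, rvDist p (fun ω => ((A ω, B ω), C ω)) ((a, b), c)
          * Real.logb 2 (rvDist p (fun ω => (B ω, C ω)) (b, c))
        = ∑ b, ∑ c, rvDist p (fun ω => (B ω, C ω)) (b, c)
          * Real.logb 2 (rvDist p (fun ω => (B ω, C ω)) (b, c)) := by
      rw [Finset.sum_comm]
      refine Finset.sum_congr rfl fun b _ => ?_
      rw [Finset.sum_comm]
      refine Finset.sum_congr rfl fun c _ => ?_
      rw [← Finset.sum_mul, ← hbc]
    have T3 : ∑ a, ∑ b, ∑ c, rvDist p (fun ω => ((A ω, B ω), C ω)) ((a, b), c)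
          * Real.logb 2 (rvDist p B b)
        = ∑ b, rvDist p B b * Real.logb 2 (rvDist p B b) := by
      rw [Finset.sum_comm]
      refine Finset.sum_congr rfl fun b _ => ?_
      calc ∑ a, ∑ c, rvDist p (fun ω => ((A ω, B ω), C ω)) ((a, b), c)
            * Real.logb 2 (rvDist p B b)
          = ∑ a, (∑ c, rvDist p (fun ω => ((A ω, B ω), C ω)) ((a, b), c))
            * Real.logb 2 (rvDist p B b) := by
            exact Finset.sum_congr rfl fun a _ => (Finset.sum_mul _ _ _).symm
        _ = (∑ a, ∑ c, rvDist p (fun ω => ((A ω, B ω), C ω)) ((a, b), c))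
            * Real.logb 2 (rvDist p B b) := (Finset.sum_mul _ _ _).symm
        _ = rvDist p B b * Real.logb 2 (rvDist p B b) := by rw [← hb]
    calc ∑ x : (α × β) × γ,
        rvDist p (fun ω => ((A ω, B ω), C ω)) x
          * Real.logb 2 (rvDist p (fun ω => ((A ω, B ω), C ω)) x)
        = ∑ a, ∑ b, ∑ c, rvDist p (fun ω => ((A ω, B ω), C ω)) ((a, b), c)
          * Real.logb 2 (rvDist p (fun ω => ((A ω, B ω), C ω)) ((a, b), c)) := by
          rw [Fintype.sum_prod_type, Fintype.sum_prod_type]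
      _ = ∑ a, ∑ b, ∑ c,
          (rvDist p (fun ω => ((A ω, B ω), C ω)) ((a, b), c)
            * Real.logb 2 (rvDist p (fun ω => (A ω, B ω)) (a, b))
          + rvDist p (fun ω => ((A ω, B ω), C ω)) ((a, b), c)
            * Real.logb 2 (rvDist p (fun ω => (B ω, C ω)) (b, c))
          - rvDist p (fun ω => ((A ω, B ω), C ω)) ((a, b), c)
            * Real.logb 2 (rvDist p B b)) := by
          exact Finset.sum_congr rfl fun a _ => Finset.sum_congr rfl fun b _ =>
            Finset.sum_congr rfl fun c _ => key a b c
      _ = (∑ a, ∑ b, ∑ c, rvDist p (fun ω => ((A ω, B ω), C ω)) ((a, b), c)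
            * Real.logb 2 (rvDist p (fun ω => (A ω, B ω)) (a, b)))
          + (∑ a, ∑ b, ∑ c, rvDist p (fun ω => ((A ω, B ω), C ω)) ((a, b), c)
            * Real.logb 2 (rvDist p (fun ω => (B ω, C ω)) (b, c)))
          - ∑ a, ∑ b, ∑ c, rvDist p (fun ω => ((A ω, B ω), C ω)) ((a, b), c)
            * Real.logb 2 (rvDist p B b) := by
          simp only [Finset.sum_add_distrib, Finset.sum_sub_distrib]
      _ = _ := by
          rw [T1, T2, T3, Fintype.sum_prod_type, Fintype.sum_prod_type]
  unfold entH
  rw [SumEq]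
  ring

lemma myCmi_eq_zero_of_markov (p : Ω → ℝ) (hp0 : ∀ ω, 0 ≤ p ω)
    (A : Ω → α) (B : Ω → β) (C : Ω → γ) (h : Markov p A B C) :
    cmi p A C B = 0 := by
  rw [myCmi_eq]
  have e1 : entH p (fun ω => (C ω, B ω)) = entH p (fun ω => (B ω, C ω)) :=
    myEntH_congr p _ _ fun ω ω' => by simp only [Prod.mk.injEq]; tauto
  have e2 : entH p (fun ω => ((A ω, C ω), B ω)) = entH p (fun ω => ((A ω, B ω), C ω)) :=
    myEntH_congr p _ _ fun ω ω' => by simp only [Prod.mk.injEq]; tauto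
  rw [e1, e2, myEntH_triple p hp0 A B C h]
  ring

end Aux4
section Aux5
variable {Ω : Type*} [Fintype Ω]

lemma myFpre_determines {r : ℕ} {𝓕 : Fin r → Type*} (F : ∀ i : Fin r, Ω → 𝓕 i)
    {k m : ℕ} (hkm : k ≤ m) {ω ω' : Ω} (h : Fpre F m ω = Fpre F m ω') :
    Fpre F k ω = Fpre F k ω' := by
  funext j
  have hj := congrFun h j
  by_cases hjk : (j : ℕ) < k
  · have hjm : (j : ℕ) < m := lt_of_lt_of_le hjk hkm
    simp only [Fpre, if_pos hjm] at hj
    simp only [Fpre, if_pos hjk]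
    exact hj
  · simp only [Fpre, if_neg hjk]

lemma myFpre_determines_F {r : ℕ} {𝓕 : Fin r → Type*} (F : ∀ i : Fin r, Ω → 𝓕 i)
    (i : Fin r) {m : ℕ} (him : (i : ℕ) < m) {ω ω' : Ω} (h : Fpre F m ω = Fpre F m ω') :
    F i ω = F i ω' := by
  have hj := congrFun h i
  simp only [Fpre, if_pos him] at hj
  exact Option.some.inj hj

lemma myFpre_succ_iff {r : ℕ} {𝓕 : Fin r → Type*} (F : ∀ i : Fin r, Ω → 𝓕 i)
    (i : Fin r) (ω ω' : Ω) :
    Fpre F ((i : ℕ) + 1) ω = Fpre F ((i : ℕ) + 1) ω'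
      ↔ (F i ω = F i ω' ∧ Fpre F (i : ℕ) ω = Fpre F (i : ℕ) ω') := by
  constructor
  · intro h
    exact ⟨myFpre_determines_F F i (Nat.lt_succ_self _) h,
      myFpre_determines F (Nat.le_succ _) h⟩
  · rintro ⟨h1, h2⟩
    funext j
    by_cases hj : (j : ℕ) < (i : ℕ) + 1
    · simp only [Fpre, if_pos hj]
      rcases Nat.lt_succ_iff_lt_or_eq.mp hj with hlt | heq
      · have := congrFun h2 j
        simp only [Fpre, if_pos hlt] at this
        exact this
      · have hji : j = i := Fin.ext heq
        subst hji
        rw [h1]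
    · simp only [Fpre, if_neg hj]

end Aux5

section Aux6
variable {Ω : Type*} [Fintype Ω]
variable {φ χ υ ζ w w' : Type*} [Fintype φ] [DecidableEq φ] [Fintype χ] [DecidableEq χ]
  [Fintype υ] [DecidableEq υ] [Fintype ζ] [DecidableEq ζ] [Fintype w] [DecidableEq w]
  [Fintype w'] [DecidableEq w']

/-- Per-round key identity: under `Fv - (W,X) - (ZZ,Y)`,
`I(Fv;Y|W) = I(X;Y|W) - I(X;Y|W')` where `W' ≡ (Fv,W)`. -/
lemma myKey_round (p : Ω → ℝ) (hp0 : ∀ ω, 0 ≤ p ω)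
    (Fv : Ω → φ) (X : Ω → χ) (Y : Ω → υ) (ZZ : Ω → ζ) (W : Ω → w) (W' : Ω → w')
    (hW' : ∀ ω ω', W' ω = W' ω' ↔ (Fv ω = Fv ω' ∧ W ω = W ω'))
    (hM : Markov p Fv (fun ω => (W ω, X ω)) (fun ω => (ZZ ω, Y ω))) :
    cmi p Fv Y W = cmi p X Y W - cmi p X Y W' := by
  have hM1 : Markov p Fv (fun ω => (W ω, X ω)) (fun ω => (Y ω, ZZ ω)) :=
    myMarkov_comp_right p Fv (fun ω => (W ω, X ω)) (fun ω => (ZZ ω, Y ω))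
      Prod.swap Prod.swap_injective hM
  have hM2 : Markov p Fv (fun ω => (W ω, X ω)) Y :=
    myMarkov_fst p Fv (fun ω => (W ω, X ω)) Y ZZ hM1
  have hzero : cmi p Fv Y (fun ω => (W ω, X ω)) = 0 :=
    myCmi_eq_zero_of_markov p hp0 Fv (fun ω => (W ω, X ω)) Y hM2
  rw [myCmi_eq] at hzero
  rw [myCmi_eq, myCmi_eq, myCmi_eq]
  -- recode everything to canonical tuples built from Fv, X, Y, W
  have e1 : entH p W' = entH p (fun ω => (Fv ω, W ω)) :=
    myEntH_congr p _ _ fun ω ω' => by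
      rw [hW', Prod.mk.injEq]
  have e2 : entH p (fun ω => (X ω, W' ω)) = entH p (fun ω => ((Fv ω, X ω), W ω)) :=
    myEntH_congr p _ _ fun ω ω' => by
      simp only [Prod.mk.injEq, hW' ω ω']; tauto
  have e3 : entH p (fun ω => (Y ω, W' ω)) = entH p (fun ω => ((Fv ω, Y ω), W ω)) :=
    myEntH_congr p _ _ fun ω ω' => by
      simp only [Prod.mk.injEq, hW' ω ω']; tauto
  have e4 : entH p (fun ω => ((X ω, Y ω), W' ω))
      = entH p (fun ω => ((Fv ω, (X ω, Y ω)), W ω)) :=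
    myEntH_congr p _ _ fun ω ω' => by
      simp only [Prod.mk.injEq, hW' ω ω']; tauto
  have e5 : entH p (fun ω => (W ω, X ω)) = entH p (fun ω => (X ω, W ω)) :=
    myEntH_congr p _ _ fun ω ω' => by simp only [Prod.mk.injEq]; tauto
  have e6 : entH p (fun ω => (Fv ω, (W ω, X ω))) = entH p (fun ω => ((Fv ω, X ω), W ω)) :=
    myEntH_congr p _ _ fun ω ω' => by simp only [Prod.mk.injEq]; tauto
  have e7 : entH p (fun ω => (Y ω, (W ω, X ω))) = entH p (fun ω => ((X ω, Y ω), W ω)) :=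
    myEntH_congr p _ _ fun ω ω' => by simp only [Prod.mk.injEq]; tauto
  have e8 : entH p (fun ω => ((Fv ω, Y ω), (W ω, X ω)))
      = entH p (fun ω => ((Fv ω, (X ω, Y ω)), W ω)) :=
    myEntH_congr p _ _ fun ω ω' => by simp only [Prod.mk.injEq]; tauto
  rw [e5, e6, e7, e8] at hzero
  rw [e1, e2, e3, e4]
  linarith

/-- Chain rule step: if `R` determines `W`, `Fv`, and `W' ≡ (Fv, W)`, then
`I(R;Z|W) = I(Fv;Z|W) + I(R;Z|W')`. -/
lemma myChain_step {ρ : Type*} [Fintype ρ] [DecidableEq ρ] (p : Ω → ℝ)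
    (R : Ω → ρ) (Z : Ω → ζ) (Fv : Ω → φ) (W : Ω → w) (W' : Ω → w')
    (hW' : ∀ ω ω', W' ω = W' ω' ↔ (Fv ω = Fv ω' ∧ W ω = W ω'))
    (hRW : ∀ ω ω', R ω = R ω' → W ω = W ω')
    (hRF : ∀ ω ω', R ω = R ω' → Fv ω = Fv ω') :
    cmi p R Z W = cmi p Fv Z W + cmi p R Z W' := by
  rw [myCmi_eq, myCmi_eq, myCmi_eq]
  have hRW' : ∀ ω ω', R ω = R ω' → W' ω = W' ω' := fun ω ω' h =>
    (hW' ω ω').2 ⟨hRF ω ω' h, hRW ω ω' h⟩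
  have a1 : entH p (fun ω => (R ω, W ω)) = entH p R :=
    myEntH_congr p _ _ fun ω ω' => by
      simp only [Prod.mk.injEq]
      exact ⟨fun h => h.1, fun h => ⟨h, hRW ω ω' h⟩⟩
  have a2 : entH p (fun ω => ((R ω, Z ω), W ω)) = entH p (fun ω => (R ω, Z ω)) :=
    myEntH_congr p _ _ fun ω ω' => by
      simp only [Prod.mk.injEq]
      exact ⟨fun h => h.1, fun h => ⟨h, hRW ω ω' h.1⟩⟩
  have a3 : entH p (fun ω => (R ω, W' ω)) = entH p R :=
    myEntH_congr p _ _ fun ω ω' => by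
      simp only [Prod.mk.injEq]
      exact ⟨fun h => h.1, fun h => ⟨h, hRW' ω ω' h⟩⟩
  have a4 : entH p (fun ω => ((R ω, Z ω), W' ω)) = entH p (fun ω => (R ω, Z ω)) :=
    myEntH_congr p _ _ fun ω ω' => by
      simp only [Prod.mk.injEq]
      exact ⟨fun h => h.1, fun h => ⟨h, hRW' ω ω' h.1⟩⟩
  have a5 : entH p W' = entH p (fun ω => (Fv ω, W ω)) :=
    myEntH_congr p _ _ fun ω ω' => by rw [hW', Prod.mk.injEq]
  have a6 : entH p (fun ω => (Z ω, W' ω)) = entH p (fun ω => ((Fv ω, Z ω), W ω)) :=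
    myEntH_congr p _ _ fun ω ω' => by
      simp only [Prod.mk.injEq, hW' ω ω']; tauto
  rw [a1, a2, a3, a4, a5, a6]
  ring

lemma myCmi_self {ρ : Type*} [Fintype ρ] [DecidableEq ρ] (p : Ω → ℝ)
    (R : Ω → ρ) (Z : Ω → ζ) : cmi p R Z R = 0 := by
  rw [myCmi_eq]
  have a1 : entH p (fun ω => (R ω, R ω)) = entH p R :=
    myEntH_congr p _ _ fun ω ω' => by simp only [Prod.mk.injEq]; tauto
  have a2 : entH p (fun ω => ((R ω, Z ω), R ω)) = entH p (fun ω => (R ω, Z ω)) :=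
    myEntH_congr p _ _ fun ω ω' => by simp only [Prod.mk.injEq]; tauto
  have a3 : entH p (fun ω => (Z ω, R ω)) = entH p (fun ω => (R ω, Z ω)) :=
    myEntH_congr p _ _ fun ω ω' => by simp only [Prod.mk.injEq]; tauto
  rw [a1, a2, a3]
  ring

lemma myTelescope (g : ℕ → ℝ) {m n : ℕ} (h : m ≤ n) :
    ∑ k ∈ Finset.Ico m n, (g k - g (k + 1)) = g m - g n := by
  induction n, h using Nat.le_induction with
  | base => simp
  | succ n hn ih => rw [Finset.sum_Ico_succ_top hn, ih]; ring

end Aux6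

/-- Under the Markov chains `F_i - F_{[1:i-1]} X_{(i)_2} - Z X_{(i+1)_2}`
(rounds indexed by `i : Fin r`, `i` corresponding to round `i+1`, so odd rounds are those with
`Even (i : ℕ)`), for every `a ∈ [1:r]` (encoded as `a : Fin r`, round `a+1`):
`∑_{i=a}^r (I(F_i;X_{(i+1)_2}|F_{[1:i-1]}) - I(F_i;Z|F_{[1:i-1]}))
  = I(X_1;X_2|F_{[1:a-1]}) - I(X_1;X_2|F_{[1:r]}) - I(F_{[1:r]};Z|F_{[1:a-1]})`. -/
theorem sum_cmi_sub_cmi_eq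
    {Ω 𝒳₁ 𝒳₂ 𝒵 : Type*} [Fintype Ω] [Fintype 𝒳₁] [DecidableEq 𝒳₁]
    [Fintype 𝒳₂] [DecidableEq 𝒳₂] [Fintype 𝒵] [DecidableEq 𝒵] {r : ℕ}
    {𝓕 : Fin r → Type*} [∀ i, Fintype (𝓕 i)] [∀ i, DecidableEq (𝓕 i)]
    (p : Ω → ℝ) (hp : IsPMF p)
    (X1 : Ω → 𝒳₁) (X2 : Ω → 𝒳₂) (Z : Ω → 𝒵) (F : ∀ i : Fin r, Ω → 𝓕 i)
    (hMarkov : ∀ i : Fin r,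
      (Even (i : ℕ) →
        Markov p (F i) (fun ω => (Fpre F (i : ℕ) ω, X1 ω)) (fun ω => (Z ω, X2 ω))) ∧
      (¬ Even (i : ℕ) →
        Markov p (F i) (fun ω => (Fpre F (i : ℕ) ω, X2 ω)) (fun ω => (Z ω, X1 ω)))) :
    ∀ a : Fin r,
      ∑ i ∈ Finset.univ.filter (fun i : Fin r => a ≤ i),
          ((if Even (i : ℕ) then cmi p (F i) X2 (Fpre F (i : ℕ))
            else cmi p (F i) X1 (Fpre F (i : ℕ)))
            - cmi p (F i) Z (Fpre F (i : ℕ)))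
        = cmi p X1 X2 (Fpre F (a : ℕ)) - cmi p X1 X2 (Fpre F r)
            - cmi p (Fpre F r) Z (Fpre F (a : ℕ)) := by
  intro a
  set g : ℕ → ℝ := fun k =>
    cmi p X1 X2 (Fpre F k) - cmi p (Fpre F r) Z (Fpre F k) with hg
  have step1 : ∀ i : Fin r,
      ((if Even (i : ℕ) then cmi p (F i) X2 (Fpre F (i : ℕ))
        else cmi p (F i) X1 (Fpre F (i : ℕ)))
        - cmi p (F i) Z (Fpre F (i : ℕ)))
      = g (i : ℕ) - g ((i : ℕ) + 1) := by
    intro i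
    have hB := myChain_step p (Fpre F r) Z (F i) (Fpre F (i : ℕ)) (Fpre F ((i : ℕ) + 1))
      (myFpre_succ_iff F i)
      (fun ω ω' h => myFpre_determines F (le_of_lt i.isLt) h)
      (fun ω ω' h => myFpre_determines_F F i i.isLt h)
    by_cases he : Even (i : ℕ)
    · rw [if_pos he]
      have hA := myKey_round p hp.1 (F i) X1 X2 Z (Fpre F (i : ℕ)) (Fpre F ((i : ℕ) + 1))
        (myFpre_succ_iff F i) ((hMarkov i).1 he)
      simp only [hg]
      linarith
    · rw [if_neg he]
      have hA := myKey_round p hp.1 (F i) X2 X1 Z (Fpre F (i : ℕ)) (Fpre F ((i : ℕ) + 1))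
        (myFpre_succ_iff F i) ((hMarkov i).2 he)
      have hc1 : cmi p X2 X1 (Fpre F (i : ℕ)) = cmi p X1 X2 (Fpre F (i : ℕ)) :=
        myCmi_comm p X2 X1 _
      have hc2 : cmi p X2 X1 (Fpre F ((i : ℕ) + 1)) = cmi p X1 X2 (Fpre F ((i : ℕ) + 1)) :=
        myCmi_comm p X2 X1 _
      simp only [hg]
      linarith
  have hIco : (Finset.range r).filter (fun k => (a : ℕ) ≤ k) = Finset.Ico (a : ℕ) r := by
    ext k
    simp [Finset.mem_Ico, and_comm]
  calc ∑ i ∈ Finset.univ.filter (fun i : Fin r => a ≤ i),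
        ((if Even (i : ℕ) then cmi p (F i) X2 (Fpre F (i : ℕ))
          else cmi p (F i) X1 (Fpre F (i : ℕ)))
          - cmi p (F i) Z (Fpre F (i : ℕ)))
      = ∑ i ∈ Finset.univ.filter (fun i : Fin r => a ≤ i), (g (i : ℕ) - g ((i : ℕ) + 1)) :=
        Finset.sum_congr rfl fun i _ => step1 i
    _ = ∑ i : Fin r, if a ≤ i then g (i : ℕ) - g ((i : ℕ) + 1) else 0 :=
        Finset.sum_filter _ _
    _ = ∑ i : Fin r, if (a : ℕ) ≤ (i : ℕ) then g (i : ℕ) - g ((i : ℕ) + 1) else 0 :=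
        Finset.sum_congr rfl fun i _ => if_congr (Fin.le_def) rfl rfl
    _ = ∑ k ∈ Finset.range r, if (a : ℕ) ≤ k then g k - g (k + 1) else 0 :=
        Fin.sum_univ_eq_sum_range (fun k => if (a : ℕ) ≤ k then g k - g (k + 1) else 0) r
    _ = ∑ k ∈ Finset.Ico (a : ℕ) r, (g k - g (k + 1)) := by
        rw [← Finset.sum_filter, hIco]
    _ = g (a : ℕ) - g r := myTelescope g (le_of_lt a.isLt)
    _ = cmi p X1 X2 (Fpre F (a : ℕ)) - cmi p X1 X2 (Fpre F r)
        - cmi p (Fpre F r) Z (Fpre F (a : ℕ)) := by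
        simp only [hg]
        rw [myCmi_self p (Fpre F r) Z]
        ring
end

section
/- Let X_1, X_2, S, Z, F_1,...,F_r be finite random variables such that for every t in [1:r] the Markov chain F_t - F_{[1:t-1]} X_{(t)_2} - X_{(t+1)_2} holds. Then for every i in [1:r], Sum_{t=1}^i H(F_t | X_{(t+1)_2}, F_{[1:t-1]}) - H(F_{[1:i]} | S, Z) = I(F_{[1:i]}; S, Z) + I(X_1; X_2 | F_{[1:i]}) - I(X_1; X_2). Consequently, the condition R_0 > Sum_{t=1}^i H(F_t | X_{(t+1)_2}, F_{[1:t-1]}) - H(F_{[1:i]} | S, Z) is equivalent to I(F_{[1:i]}; S, Z) + I(X_1; X_2 | F_{[1:i]}) < R_0 + I(X_1; X_2). -/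
open scoped BigOperators

set_option linter.unusedSectionVars false
set_option linter.unusedVariables false

section Helpers

namespace InfoTheory

variable {Ω : Type*} [Fintype Ω]

lemma rvDist_nonneg {α : Type*} [Fintype α] [DecidableEq α]
    (p : Ω → ℝ) (hp0 : ∀ ω, 0 ≤ p ω) (A : Ω → α) (a : α) : 0 ≤ rvDist p A a :=
  Finset.sum_nonneg fun ω _ => by split <;> [exact hp0 ω; exact le_refl 0]

/-- Entropy only depends on the induced partition. -/
lemma entH_congr {α β : Type*} [Fintype α] [DecidableEq α] [Fintype β] [DecidableEq β]
    (p : Ω → ℝ) (A : Ω → α) (B : Ω → β)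
    (h : ∀ ω ω', A ω = A ω' ↔ B ω = B ω') : entH p A = entH p B := by
  classical
  rcases isEmpty_or_nonempty Ω with hΩ | hΩ
  · simp [entH, rvDist, Finset.univ_eq_empty]
  · let g : α → β := fun a => if hx : ∃ ω, A ω = a then B hx.choose else B (Classical.arbitrary Ω)
    have hg1 : ∀ ω, g (A ω) = B ω := by
      intro ω
      have hx : ∃ ω', A ω' = A ω := ⟨ω, rfl⟩
      simp only [g, dif_pos hx]
      exact (h _ _).1 hx.choose_spec
    have key : ∀ ω, rvDist p A (A ω) = rvDist p B (B ω) := by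
      intro ω
      refine Finset.sum_congr rfl fun ω' _ => ?_
      by_cases hh : A ω' = A ω
      · rw [if_pos hh, if_pos ((h ω' ω).1 hh)]
      · rw [if_neg hh, if_neg fun hb => hh ((h ω' ω).2 hb)]
    have zeroA : ∀ a ∉ Finset.image A Finset.univ,
        rvDist p A a * Real.logb 2 (rvDist p A a) = 0 := by
      intro a ha
      have : rvDist p A a = 0 :=
        Finset.sum_eq_zero fun ω _ => if_neg fun he =>
          ha (Finset.mem_image.2 ⟨ω, Finset.mem_univ _, he⟩)
      simp [this]
    have zeroB : ∀ b ∉ Finset.image B Finset.univ,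
        rvDist p B b * Real.logb 2 (rvDist p B b) = 0 := by
      intro b hb
      have : rvDist p B b = 0 :=
        Finset.sum_eq_zero fun ω _ => if_neg fun he =>
          hb (Finset.mem_image.2 ⟨ω, Finset.mem_univ _, he⟩)
      simp [this]
    unfold entH
    rw [← Finset.sum_subset (Finset.subset_univ (Finset.image A Finset.univ)) (fun a _ ha => zeroA a ha),
        ← Finset.sum_subset (Finset.subset_univ (Finset.image B Finset.univ)) (fun b _ hb => zeroB b hb)]
    congr 1
    refine Finset.sum_bij (fun a _ => g a) ?_ ?_ ?_ ?_
    · rintro a ha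
      obtain ⟨ω, -, rfl⟩ := Finset.mem_image.1 ha
      simp only [hg1]
      exact Finset.mem_image.2 ⟨ω, Finset.mem_univ _, rfl⟩
    · rintro a ha a' ha' hgg
      obtain ⟨ω, -, rfl⟩ := Finset.mem_image.1 ha
      obtain ⟨ω', -, rfl⟩ := Finset.mem_image.1 ha'
      simp only [hg1] at hgg
      exact (h ω ω').2 hgg
    · rintro b hb
      obtain ⟨ω, -, rfl⟩ := Finset.mem_image.1 hb
      exact ⟨A ω, Finset.mem_image.2 ⟨ω, Finset.mem_univ _, rfl⟩, hg1 ω⟩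
    · rintro a ha
      obtain ⟨ω, -, rfl⟩ := Finset.mem_image.1 ha
      simp only [hg1, key]

end InfoTheory
end Helpers

section Helpers2
namespace InfoTheory
variable {Ω : Type*} [Fintype Ω]

lemma rvDist_sum_snd {α β : Type*} [Fintype α] [DecidableEq α] [Fintype β] [DecidableEq β]
    (p : Ω → ℝ) (U : Ω → α) (V : Ω → β) (x : α) :
    ∑ y, rvDist p (fun ω => (U ω, V ω)) (x, y) = rvDist p U x := by
  unfold rvDist
  rw [Finset.sum_comm]
  refine Finset.sum_congr rfl fun ω _ => ?_
  by_cases h : U ω = x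
  · simp [Prod.ext_iff, h]
  · simp [Prod.ext_iff, h]

lemma rvDist_sum_fst {α β : Type*} [Fintype α] [DecidableEq α] [Fintype β] [DecidableEq β]
    (p : Ω → ℝ) (U : Ω → α) (V : Ω → β) (y : β) :
    ∑ x, rvDist p (fun ω => (U ω, V ω)) (x, y) = rvDist p V y := by
  unfold rvDist
  rw [Finset.sum_comm]
  refine Finset.sum_congr rfl fun ω _ => ?_
  by_cases h : V ω = y
  · simp [Prod.ext_iff, h]
  · simp [Prod.ext_iff, h]

lemma rvDist_triple_sum_fst {α β γ : Type*} [Fintype α] [DecidableEq α] [Fintype β]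
    [DecidableEq β] [Fintype γ] [DecidableEq γ]
    (p : Ω → ℝ) (A : Ω → α) (B : Ω → β) (C : Ω → γ) (b : β) (c : γ) :
    ∑ a, rvDist p (fun ω => ((A ω, B ω), C ω)) ((a, b), c)
      = rvDist p (fun ω => (B ω, C ω)) (b, c) := by
  unfold rvDist
  rw [Finset.sum_comm]
  refine Finset.sum_congr rfl fun ω _ => ?_
  by_cases h : B ω = b ∧ C ω = c
  · simp [Prod.ext_iff, h.1, h.2]
  · simp only [Prod.ext_iff]
    rw [if_neg h]
    refine Finset.sum_eq_zero fun a _ => if_neg fun hcon => h ⟨hcon.1.2, hcon.2⟩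

lemma markov_entH {α β γ : Type*} [Fintype α] [DecidableEq α] [Fintype β] [DecidableEq β]
    [Fintype γ] [DecidableEq γ]
    (p : Ω → ℝ) (hp0 : ∀ ω, 0 ≤ p ω) (A : Ω → α) (B : Ω → β) (C : Ω → γ)
    (hM : Markov p A B C) :
    entH p (fun ω => ((A ω, B ω), C ω)) + entH p B
      = entH p (fun ω => (A ω, B ω)) + entH p (fun ω => (B ω, C ω)) := by
  classical
  set d3 := rvDist p (fun ω => ((A ω, B ω), C ω)) with hd3
  set dAB := rvDist p (fun ω => (A ω, B ω)) with hdAB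
  set dBC := rvDist p (fun ω => (B ω, C ω)) with hdBC
  set dB := rvDist p B with hdB
  have n3 : ∀ x, 0 ≤ d3 x := rvDist_nonneg p hp0 _
  have le1 : ∀ a b c, d3 ((a, b), c) ≤ dAB (a, b) := by
    intro a b c
    refine Finset.sum_le_sum fun ω _ => ?_
    simp only [Prod.mk.injEq]
    split_ifs with h1 h2 h2
    · exact le_refl _
    · exact absurd h1.1 h2
    · exact hp0 ω
    · exact le_refl 0
  have le2 : ∀ a b c, d3 ((a, b), c) ≤ dBC (b, c) := by
    intro a b c
    refine Finset.sum_le_sum fun ω _ => ?_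
    simp only [Prod.mk.injEq]
    split_ifs with h1 h2 h2
    · exact le_refl _
    · exact absurd ⟨h1.1.2, h1.2⟩ h2
    · exact hp0 ω
    · exact le_refl 0
  have le3 : ∀ a b c, d3 ((a, b), c) ≤ dB b := by
    intro a b c
    refine Finset.sum_le_sum fun ω _ => ?_
    simp only [Prod.mk.injEq]
    split_ifs with h1 h2 h2
    · exact le_refl _
    · exact absurd h1.1.2 h2
    · exact hp0 ω
    · exact le_refl 0
  have key : ∀ a b c, d3 ((a, b), c) * Real.logb 2 (d3 ((a, b), c))
      = d3 ((a, b), c) * Real.logb 2 (dAB (a, b)) + d3 ((a, b), c) * Real.logb 2 (dBC (b, c))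
        - d3 ((a, b), c) * Real.logb 2 (dB b) := by
    intro a b c
    rcases (n3 ((a, b), c)).eq_or_lt with h | h
    · rw [← h]; ring
    · have hB : 0 < dB b := lt_of_lt_of_le h (le3 a b c)
      have hAB : 0 < dAB (a, b) := lt_of_lt_of_le h (le1 a b c)
      have hBC : 0 < dBC (b, c) := lt_of_lt_of_le h (le2 a b c)
      have hM' : d3 ((a, b), c) * dB b = dAB (a, b) * dBC (b, c) := hM a b c
      have hlog := congrArg (Real.logb 2) hM'
      rw [Real.logb_mul (ne_of_gt h) (ne_of_gt hB),
          Real.logb_mul (ne_of_gt hAB) (ne_of_gt hBC)] at hlog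
      have : Real.logb 2 (d3 ((a, b), c))
          = Real.logb 2 (dAB (a, b)) + Real.logb 2 (dBC (b, c)) - Real.logb 2 (dB b) := by
        linarith
      rw [this]; ring
  have m1 : ∀ y : α × β, (∑ c, d3 (y, c)) = dAB y := fun y =>
    rvDist_sum_snd p (fun ω => (A ω, B ω)) C y
  have m2 : ∀ b c, (∑ a, d3 ((a, b), c)) = dBC (b, c) := fun b c =>
    rvDist_triple_sum_fst p A B C b c
  have m3 : ∀ b, (∑ a, dAB (a, b)) = dB b := fun b => rvDist_sum_fst p A B b
  have expand3 : entH p (fun ω => ((A ω, B ω), C ω))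
      = -∑ a, ∑ b, ∑ c, d3 ((a, b), c) * Real.logb 2 (d3 ((a, b), c)) := by
    simp only [entH, Fintype.sum_prod_type, ← hd3]
  have expandAB : entH p (fun ω => (A ω, B ω))
      = -∑ a, ∑ b, dAB (a, b) * Real.logb 2 (dAB (a, b)) := by
    simp only [entH, Fintype.sum_prod_type, ← hdAB]
  have expandBC : entH p (fun ω => (B ω, C ω))
      = -∑ b, ∑ c, dBC (b, c) * Real.logb 2 (dBC (b, c)) := by
    simp only [entH, Fintype.sum_prod_type, ← hdBC]
  have expandB : entH p B = -∑ b, dB b * Real.logb 2 (dB b) := by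
    simp only [entH, ← hdB]
  rw [expand3, expandAB, expandBC, expandB]
  have SAB : (∑ a, ∑ b, dAB (a, b) * Real.logb 2 (dAB (a, b)))
      = ∑ a, ∑ b, ∑ c, d3 ((a, b), c) * Real.logb 2 (dAB (a, b)) := by
    refine Finset.sum_congr rfl fun a _ => Finset.sum_congr rfl fun b _ => ?_
    rw [← Finset.sum_mul, m1]
  have SBC : (∑ b, ∑ c, dBC (b, c) * Real.logb 2 (dBC (b, c)))
      = ∑ a, ∑ b, ∑ c, d3 ((a, b), c) * Real.logb 2 (dBC (b, c)) := by
    calc (∑ b, ∑ c, dBC (b, c) * Real.logb 2 (dBC (b, c)))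
        = ∑ b, ∑ c, ∑ a, d3 ((a, b), c) * Real.logb 2 (dBC (b, c)) := by
          refine Finset.sum_congr rfl fun b _ => Finset.sum_congr rfl fun c _ => ?_
          rw [← Finset.sum_mul, m2]
      _ = ∑ b, ∑ a, ∑ c, d3 ((a, b), c) * Real.logb 2 (dBC (b, c)) :=
          Finset.sum_congr rfl fun b _ => Finset.sum_comm
      _ = ∑ a, ∑ b, ∑ c, d3 ((a, b), c) * Real.logb 2 (dBC (b, c)) := Finset.sum_comm
  have SB : (∑ b, dB b * Real.logb 2 (dB b))
      = ∑ a, ∑ b, ∑ c, d3 ((a, b), c) * Real.logb 2 (dB b) := by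
    calc (∑ b, dB b * Real.logb 2 (dB b))
        = ∑ b, ∑ a, ∑ c, d3 ((a, b), c) * Real.logb 2 (dB b) := by
          refine Finset.sum_congr rfl fun b _ => ?_
          rw [← m3 b, Finset.sum_mul]
          refine Finset.sum_congr rfl fun a _ => ?_
          rw [← Finset.sum_mul, m1]
      _ = ∑ a, ∑ b, ∑ c, d3 ((a, b), c) * Real.logb 2 (dB b) := Finset.sum_comm
  rw [SAB, SBC, SB]
  have comb : (∑ a, ∑ b, ∑ c, d3 ((a, b), c) * Real.logb 2 (d3 ((a, b), c)))
        + (∑ a, ∑ b, ∑ c, d3 ((a, b), c) * Real.logb 2 (dB b))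
      = (∑ a, ∑ b, ∑ c, d3 ((a, b), c) * Real.logb 2 (dAB (a, b)))
        + (∑ a, ∑ b, ∑ c, d3 ((a, b), c) * Real.logb 2 (dBC (b, c))) := by
    simp only [← Finset.sum_add_distrib]
    refine Finset.sum_congr rfl fun a _ => Finset.sum_congr rfl fun b _ =>
      Finset.sum_congr rfl fun c _ => ?_
    have := key a b c
    linarith
  linarith [comb]

end InfoTheory
end Helpers2

section Helpers3
namespace InfoTheory
variable {Ω : Type*} [Fintype Ω]

lemma fpre_succ_iff {r : ℕ} {𝓕 : Fin r → Type*} (F : ∀ i : Fin r, Ω → 𝓕 i) (t : Fin r)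
    (ω ω' : Ω) :
    Fpre F ((t : ℕ) + 1) ω = Fpre F ((t : ℕ) + 1) ω'
      ↔ (F t ω = F t ω' ∧ Fpre F (t : ℕ) ω = Fpre F (t : ℕ) ω') := by
  unfold Fpre
  constructor
  · intro h
    have ht := congrFun h t
    rw [if_pos (Nat.lt_succ_self _), if_pos (Nat.lt_succ_self _)] at ht
    refine ⟨Option.some.inj ht, funext fun j => ?_⟩
    have hj := congrFun h j
    by_cases hjt : (j : ℕ) < (t : ℕ)
    · rw [if_pos hjt, if_pos hjt]
      rw [if_pos (by omega), if_pos (by omega)] at hj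
      exact hj
    · rw [if_neg hjt, if_neg hjt]
  · rintro ⟨h1, h2⟩
    funext j
    by_cases hjt : (j : ℕ) < (t : ℕ)
    · have hj := congrFun h2 j
      rw [if_pos hjt, if_pos hjt] at hj
      rw [if_pos (by omega), if_pos (by omega)]
      exact hj
    · by_cases hje : (j : ℕ) = (t : ℕ)
      · have : j = t := Fin.ext hje
        subst this
        rw [if_pos (by omega), if_pos (by omega), h1]
      · rw [if_neg (by omega), if_neg (by omega)]

lemma fpre_zero {r : ℕ} {𝓕 : Fin r → Type*} (F : ∀ i : Fin r, Ω → 𝓕 i) (ω : Ω) :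
    Fpre F 0 ω = fun _ => none :=
  funext fun j => if_neg (Nat.not_lt_zero _)

lemma step_lemma {𝒳 𝒴 : Type*} [Fintype 𝒳] [DecidableEq 𝒳] [Fintype 𝒴] [DecidableEq 𝒴]
    {r : ℕ} {𝓕 : Fin r → Type*} [∀ i, Fintype (𝓕 i)] [∀ i, DecidableEq (𝓕 i)]
    (p : Ω → ℝ) (hp0 : ∀ ω, 0 ≤ p ω)
    (X : Ω → 𝒳) (Y : Ω → 𝒴) (F : ∀ i : Fin r, Ω → 𝓕 i) (t : Fin r)
    (hM : Markov p (F t) (fun ω => (Fpre F (t : ℕ) ω, X ω)) Y) :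
    condH p (F t) (fun ω => (Y ω, Fpre F (t : ℕ) ω))
      = (entH p (fun ω => (X ω, Fpre F ((t : ℕ) + 1) ω))
          + entH p (fun ω => (Y ω, Fpre F ((t : ℕ) + 1) ω))
          - entH p (fun ω => ((X ω, Y ω), Fpre F ((t : ℕ) + 1) ω)))
        - (entH p (fun ω => (X ω, Fpre F (t : ℕ) ω))
          + entH p (fun ω => (Y ω, Fpre F (t : ℕ) ω))
          - entH p (fun ω => ((X ω, Y ω), Fpre F (t : ℕ) ω))) := by
  have hMk := markov_entH p hp0 (F t) (fun ω => (Fpre F (t : ℕ) ω, X ω)) Y hM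
  have e1 : entH p (fun ω => (F t ω, (Y ω, Fpre F (t : ℕ) ω)))
      = entH p (fun ω => (Y ω, Fpre F ((t : ℕ) + 1) ω)) := by
    refine entH_congr p _ _ fun ω ω' => ?_
    simp only [Prod.mk.injEq, fpre_succ_iff]
    tauto
  have e2 : entH p (fun ω => ((F t ω, (Fpre F (t : ℕ) ω, X ω)), Y ω))
      = entH p (fun ω => ((X ω, Y ω), Fpre F ((t : ℕ) + 1) ω)) := by
    refine entH_congr p _ _ fun ω ω' => ?_
    simp only [Prod.mk.injEq, fpre_succ_iff]
    tauto
  have e3 : entH p (fun ω => (Fpre F (t : ℕ) ω, X ω))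
      = entH p (fun ω => (X ω, Fpre F (t : ℕ) ω)) := by
    refine entH_congr p _ _ fun ω ω' => ?_
    simp only [Prod.mk.injEq]
    tauto
  have e4 : entH p (fun ω => (F t ω, (Fpre F (t : ℕ) ω, X ω)))
      = entH p (fun ω => (X ω, Fpre F ((t : ℕ) + 1) ω)) := by
    refine entH_congr p _ _ fun ω ω' => ?_
    simp only [Prod.mk.injEq, fpre_succ_iff]
    tauto
  have e5 : entH p (fun ω => ((Fpre F (t : ℕ) ω, X ω), Y ω))
      = entH p (fun ω => ((X ω, Y ω), Fpre F (t : ℕ) ω)) := by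
    refine entH_congr p _ _ fun ω ω' => ?_
    simp only [Prod.mk.injEq]
    tauto
  rw [e2, e3, e4, e5] at hMk
  simp only [condH]
  rw [e1]
  linarith

lemma sum_filter_le_eq_range {r : ℕ} (i : Fin r) (g : ℕ → ℝ) :
    ∑ t ∈ Finset.univ.filter (fun t : Fin r => t ≤ i), g (t : ℕ)
      = ∑ k ∈ Finset.range ((i : ℕ) + 1), g k := by
  refine Finset.sum_nbij' (fun t => (t : ℕ))
    (fun k => if h : k < r then (⟨k, h⟩ : Fin r) else i) ?_ ?_ ?_ ?_ ?_
  · intro t ht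
    simp only [Finset.mem_filter, Finset.mem_univ, true_and] at ht
    simp only [Finset.mem_range]
    omega
  · intro k hk
    simp only [Finset.mem_range] at hk
    have hkr : k < r := by omega
    simp only [dif_pos hkr, Finset.mem_filter, Finset.mem_univ, true_and]
    exact Fin.mk_le_of_le_val (by omega)
  · intro t ht
    simp only [Fin.is_lt, dif_pos, Fin.eta]
  · intro k hk
    simp only [Finset.mem_range] at hk
    have hkr : k < r := by omega
    simp [dif_pos hkr]
  · intro t ht
    rfl

end InfoTheory
end Helpers3


open InfoTheory

/-- Under the Markov chains `F_t - F_{[1:t-1]} X_{(t)_2} - X_{(t+1)_2}`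
(rounds indexed by `t : Fin r`, `t` corresponding to round `t+1`, so odd rounds are those with
`Even (t : ℕ)`), for every `i ∈ [1:r]` (encoded as `i : Fin r`, round `i+1`, so that
`F_{[1:i]}` is the prefix of length `(i : ℕ) + 1`):
`∑_{t=1}^i H(F_t|X_{(t+1)_2},F_{[1:t-1]}) - H(F_{[1:i]}|S,Z)
  = I(F_{[1:i]};S,Z) + I(X_1;X_2|F_{[1:i]}) - I(X_1;X_2)`,
and consequently `R_0 > ∑_{t=1}^i H(F_t|X_{(t+1)_2},F_{[1:t-1]}) - H(F_{[1:i]}|S,Z)` is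
equivalent to `I(F_{[1:i]};S,Z) + I(X_1;X_2|F_{[1:i]}) < R_0 + I(X_1;X_2)`. -/
theorem sum_condH_sub_condH_eq
    {Ω 𝒳₁ 𝒳₂ 𝒮 𝒵 : Type*} [Fintype Ω] [Fintype 𝒳₁] [DecidableEq 𝒳₁]
    [Fintype 𝒳₂] [DecidableEq 𝒳₂] [Fintype 𝒮] [DecidableEq 𝒮]
    [Fintype 𝒵] [DecidableEq 𝒵] {r : ℕ}
    {𝓕 : Fin r → Type*} [∀ i, Fintype (𝓕 i)] [∀ i, DecidableEq (𝓕 i)]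
    (p : Ω → ℝ) (hp : IsPMF p)
    (X1 : Ω → 𝒳₁) (X2 : Ω → 𝒳₂) (S : Ω → 𝒮) (Z : Ω → 𝒵)
    (F : ∀ i : Fin r, Ω → 𝓕 i)
    (hMarkov : ∀ t : Fin r,
      (Even (t : ℕ) →
        Markov p (F t) (fun ω => (Fpre F (t : ℕ) ω, X1 ω)) X2) ∧
      (¬ Even (t : ℕ) →
        Markov p (F t) (fun ω => (Fpre F (t : ℕ) ω, X2 ω)) X1)) :
    ∀ i : Fin r,
      ((∑ t ∈ Finset.univ.filter (fun t : Fin r => t ≤ i),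
          (if Even (t : ℕ) then condH p (F t) (fun ω => (X2 ω, Fpre F (t : ℕ) ω))
           else condH p (F t) (fun ω => (X1 ω, Fpre F (t : ℕ) ω))))
        - condH p (Fpre F ((i : ℕ) + 1)) (fun ω => (S ω, Z ω))
        = mi p (Fpre F ((i : ℕ) + 1)) (fun ω => (S ω, Z ω))
            + cmi p X1 X2 (Fpre F ((i : ℕ) + 1)) - mi p X1 X2)
      ∧ ∀ R0 : ℝ,
        (R0 > (∑ t ∈ Finset.univ.filter (fun t : Fin r => t ≤ i),
            (if Even (t : ℕ) then condH p (F t) (fun ω => (X2 ω, Fpre F (t : ℕ) ω))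
             else condH p (F t) (fun ω => (X1 ω, Fpre F (t : ℕ) ω))))
          - condH p (Fpre F ((i : ℕ) + 1)) (fun ω => (S ω, Z ω)))
        ↔ mi p (Fpre F ((i : ℕ) + 1)) (fun ω => (S ω, Z ω))
            + cmi p X1 X2 (Fpre F ((i : ℕ) + 1)) < R0 + mi p X1 X2 := by
  obtain ⟨hp0, hp1⟩ := hp
  intro i
  -- the telescoping quantity
  set DN : ℕ → ℝ := fun k =>
    entH p (fun ω => (X1 ω, Fpre F k ω)) + entH p (fun ω => (X2 ω, Fpre F k ω))
      - entH p (fun ω => ((X1 ω, X2 ω), Fpre F k ω)) with hDN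
  have hswap : ∀ k : ℕ, entH p (fun ω => ((X2 ω, X1 ω), Fpre F k ω))
      = entH p (fun ω => ((X1 ω, X2 ω), Fpre F k ω)) := by
    intro k
    refine entH_congr p _ _ fun ω ω' => ?_
    simp only [Prod.mk.injEq]
    tauto
  have hT : ∀ t ∈ Finset.univ.filter (fun t : Fin r => t ≤ i),
      (if Even (t : ℕ) then condH p (F t) (fun ω => (X2 ω, Fpre F (t : ℕ) ω))
       else condH p (F t) (fun ω => (X1 ω, Fpre F (t : ℕ) ω)))
      = DN ((t : ℕ) + 1) - DN (t : ℕ) := by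
    intro t _
    by_cases he : Even (t : ℕ)
    · rw [if_pos he, step_lemma p hp0 X1 X2 F t ((hMarkov t).1 he)]
    · rw [if_neg he, step_lemma p hp0 X2 X1 F t ((hMarkov t).2 he)]
      simp only [hDN]
      rw [hswap, hswap]
      ring
  rw [Finset.sum_congr rfl hT]
  have hsum : ∑ t ∈ Finset.univ.filter (fun t : Fin r => t ≤ i),
      (DN ((t : ℕ) + 1) - DN (t : ℕ)) = DN ((i : ℕ) + 1) - DN 0 := by
    rw [sum_filter_le_eq_range i (fun k => DN (k + 1) - DN k)]
    exact Finset.sum_range_sub DN ((i : ℕ) + 1)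
  rw [hsum]
  -- relabel the length-0 prefixes away
  have hz : ∀ ω : Ω, Fpre F 0 ω = fun _ => none := fpre_zero F
  have r1 : entH p (fun ω => (X1 ω, Fpre F 0 ω)) = entH p X1 := by
    refine entH_congr p _ _ fun ω ω' => ?_
    simp [Prod.mk.injEq, hz]
  have r2 : entH p (fun ω => (X2 ω, Fpre F 0 ω)) = entH p X2 := by
    refine entH_congr p _ _ fun ω ω' => ?_
    simp [Prod.mk.injEq, hz]
  have r3 : entH p (fun ω => ((X1 ω, X2 ω), Fpre F 0 ω))
      = entH p (fun ω => (X1 ω, X2 ω)) := by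
    refine entH_congr p _ _ fun ω ω' => ?_
    simp [Prod.mk.injEq, hz]
  have main : DN ((i : ℕ) + 1) - DN 0
        - condH p (Fpre F ((i : ℕ) + 1)) (fun ω => (S ω, Z ω))
      = mi p (Fpre F ((i : ℕ) + 1)) (fun ω => (S ω, Z ω))
          + cmi p X1 X2 (Fpre F ((i : ℕ) + 1)) - mi p X1 X2 := by
    simp only [hDN, condH, mi, cmi, r1, r2, r3]
    ring
  exact ⟨main, fun R0 => ⟨fun h => by linarith, fun h => by linarith⟩⟩
end
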